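/- arXiv:1911.00223 — 6 statements merged into one kernel-verified Lean document; each statement's English description precedes it below -/
import Mathlib

section
/- Let G be a finite connected simple graph with real edge weights that are pairwise distinct, and let T be its (unique) minimum spanning tree. If Prim's algorithm is run on G starting from a seed vertex v₀, producing the Prim order P of G, and Prim's algorithm is run on T starting from the same seed vertex v₀, producing the Prim order P_T of T, then P = P_T; that is, the Prim order of G with seed v₀ coincides with the Prim order of T with seed v₀. -/
open SimpleGraph

variable {V : Type*}

/-- `P` is a Prim order of the graph `H` restricted to the vertex set `S`, with seed `v₀`:
`P` maps `S` bijectively onto `{1, …, |S|}`, `P v₀ = 1`, and each vertex other than the seed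
is joined to an earlier vertex by an edge of minimum weight among all edges of `H` (within `S`)
from the earlier vertices to the later ones. -/
def IsPrimOrderOn (H : SimpleGraph V) (w : Sym2 V → ℝ)
    (S : Set V) (v₀ : V) (P : V → ℕ) : Prop :=
  v₀ ∈ S ∧ P v₀ = 1 ∧ Set.BijOn P S (Set.Icc 1 S.ncard) ∧
    ∀ v ∈ S, P v ≠ 1 →
      ∃ u ∈ S, P u < P v ∧ H.Adj u v ∧
        ∀ x ∈ S, ∀ y ∈ S, P x < P v → P v ≤ P y → H.Adj x y →
          w s(u, v) ≤ w s(x, y)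

/-- Total edge weight of a graph on a finite vertex type. -/
noncomputable def totalWeight [Fintype V] (H : SimpleGraph V) (w : Sym2 V → ℝ) : ℝ :=
  ∑ e ∈ H.edgeSet.toFinite.toFinset, w e

/-- `H` is a tree on the vertex set `S`: all its edges lie within `S`, any two vertices of `S`
are joined by a path, and `H` is acyclic. -/
def IsTreeOn (H : SimpleGraph V) (S : Set V) : Prop :=
  (∀ e ∈ H.edgeSet, ∀ v ∈ e, v ∈ S) ∧ (∀ u ∈ S, ∀ v ∈ S, H.Reachable u v) ∧ H.IsAcyclic

/-- `T` is a minimum spanning tree of `G` on the vertex set `S`. -/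
def IsMSTOn [Fintype V] (G : SimpleGraph V) (w : Sym2 V → ℝ) (S : Set V)
    (T : SimpleGraph V) : Prop :=
  T ≤ G ∧ IsTreeOn T S ∧
    ∀ T' : SimpleGraph V, T' ≤ G → IsTreeOn T' S → totalWeight T w ≤ totalWeight T' w

/-- Restriction of a graph to the edges with both endpoints in `S`. -/
def restrictTo (H : SimpleGraph V) (S : Set V) : SimpleGraph V where
  Adj a b := H.Adj a b ∧ a ∈ S ∧ b ∈ S
  symm := ⟨fun a b ⟨h, ha, hb⟩ => ⟨h.symm, hb, ha⟩⟩
  loopless := ⟨fun a ⟨h, _, _⟩ => H.loopless.irrefl a h⟩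

/-- Prim order of an edge: the larger of the Prim orders of its endpoints. -/
def edgeOrder (P : V → ℕ) : Sym2 V → ℕ :=
  Sym2.lift ⟨fun u v => max (P u) (P v), fun u v => max_comm _ _⟩

private lemma split_at_crossing {H : SimpleGraph V} {L : Set V} {b : V} :
    ∀ {a : V} (p : H.Walk a b), a ∈ L → b ∉ L →
      ∃ (x y : V) (hxy : H.Adj x y) (q1 : H.Walk a x) (q2 : H.Walk y b),
        x ∈ L ∧ y ∉ L ∧ p = q1.append (SimpleGraph.Walk.cons hxy q2) := by
  intro a p
  induction p with
  | nil => intro ha hb; exact absurd ha hb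
  | @cons a c b h q ih =>
    intro ha hb
    by_cases hc : c ∈ L
    · obtain ⟨x, y, hxy, q1, q2, hx, hy, rfl⟩ := ih hc hb
      exact ⟨x, y, hxy, SimpleGraph.Walk.cons h q1, q2, hx, hy, rfl⟩
    · exact ⟨a, c, h, SimpleGraph.Walk.nil, q, ha, hc, rfl⟩

private lemma cut_property {V : Type*} [Fintype V] {G T : SimpleGraph V} {w : Sym2 V → ℝ}
    (hdistinct : Set.InjOn w G.edgeSet) (hT : IsMSTOn G w Set.univ T)
    {L : Set V} {a b : V} (ha : a ∈ L) (hb : b ∉ L) (hab : G.Adj a b)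
    (hmin : ∀ x y : V, x ∈ L → y ∉ L → G.Adj x y → w s(a, b) ≤ w s(x, y)) :
    T.Adj a b := by
  classical
  by_contra hnadj
  obtain ⟨hTG, ⟨hTin, hTreach, hTacyc⟩, hTmin⟩ := hT
  obtain ⟨p0⟩ := hTreach a trivial b trivial
  set p : T.Path a b := p0.toPath with hpdef
  obtain ⟨x, y, hxy, q1, q2, hx, hy, hsplit⟩ := split_at_crossing (p : T.Walk a b) ha hb
  set e := s(a, b) with hedef
  set f := s(x, y) with hfdef
  have hTGedge : T.edgeSet ⊆ G.edgeSet := SimpleGraph.edgeSet_mono hTG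
  have hfT : f ∈ T.edgeSet := hxy
  have heG : e ∈ G.edgeSet := hab
  have hfG : f ∈ G.edgeSet := hTGedge hfT
  have heT : e ∉ T.edgeSet := hnadj
  have hnde : ¬ e.IsDiag := by rw [hedef, Sym2.mk_isDiag_iff]; exact hab.ne
  have hef : e ≠ f := fun h => heT (h ▸ hfT)
  have hwef : w e < w f :=
    lt_of_le_of_ne (hmin x y hx hy (hTG hxy)) fun h => hef (hdistinct heG hfG h)
  have hfp : f ∈ (p : T.Walk a b).edges := by
    rw [hsplit]
    simp [SimpleGraph.Walk.edges_append, hfdef]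
  have hftrail := p.2.isTrail
  have hnodup : ((p : T.Walk a b).edges).Nodup := hftrail.edges_nodup
  have hfq1 : f ∉ q1.edges := by
    rw [hsplit] at hnodup
    simp only [SimpleGraph.Walk.edges_append, SimpleGraph.Walk.edges_cons] at hnodup
    intro hmem
    have := List.disjoint_of_nodup_append hnodup
    exact this hmem (by simp [hfdef])
  have hfq2 : f ∉ q2.edges := by
    rw [hsplit] at hnodup
    simp only [SimpleGraph.Walk.edges_append, SimpleGraph.Walk.edges_cons] at hnodup
    have := (List.nodup_append.mp hnodup).2.1
    exact fun hmem => (List.nodup_cons.mp this).1 hmem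
  -- the exchange graph
  set T' := SimpleGraph.fromEdgeSet (insert e (T.edgeSet \ {f})) with hT'def
  have hnd : ∀ e' ∈ insert e (T.edgeSet \ {f}), ¬ e'.IsDiag := by
    rintro e' (rfl | ⟨he', -⟩)
    · exact hnde
    · exact T.not_isDiag_of_mem_edgeSet he'
  have hT'edge : T'.edgeSet = insert e (T.edgeSet \ {f}) := by
    rw [hT'def, SimpleGraph.edgeSet_fromEdgeSet]
    ext e'
    simp only [Set.mem_diff, Set.mem_setOf_eq]
    exact ⟨fun h => h.1, fun h => ⟨h, hnd _ h⟩⟩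
  have hT'G : T' ≤ G := by
    rw [← SimpleGraph.edgeSet_subset_edgeSet, hT'edge]
    rintro e' he'
    rcases he' with rfl | ⟨he', -⟩
    · exact heG
    · exact hTGedge he'
  have hDle : T.deleteEdges {f} ≤ T' := by
    rw [← SimpleGraph.edgeSet_subset_edgeSet, SimpleGraph.edgeSet_deleteEdges, hT'edge]
    exact Set.subset_insert _ _
  have hT'ab : T'.Adj a b := by
    rw [← SimpleGraph.mem_edgeSet, hT'edge]
    exact Set.mem_insert _ _
  -- x and y are reachable in T'
  have hreachxy : T'.Reachable x y := by
    have w1 : (T.deleteEdges {f}).Walk a x := q1.toDeleteEdges {f}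
      (fun e' he' h1 => hfq1 (by simpa using h1 ▸ he'))
    have w2 : (T.deleteEdges {f}).Walk y b := q2.toDeleteEdges {f}
      (fun e' he' h1 => hfq2 (by simpa using h1 ▸ he'))
    have r1 : T'.Reachable a x := ⟨w1.mapLe hDle⟩
    have r2 : T'.Reachable y b := ⟨w2.mapLe hDle⟩
    exact (r1.symm.trans hT'ab.reachable).trans r2.symm
  have hkey : ∀ u v : V, T.Reachable u v → T'.Reachable u v := by
    intro u v huv
    obtain ⟨r⟩ := huv
    induction r with
    | nil => exact SimpleGraph.Reachable.refl _
    | @cons u c v h q ih =>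
      refine SimpleGraph.Reachable.trans ?_ ih
      by_cases hfe : s(u, c) = f
      · rw [hfdef, Sym2.eq_iff] at hfe
        rcases hfe with ⟨rfl, rfl⟩ | ⟨rfl, rfl⟩
        · exact hreachxy
        · exact hreachxy.symm
      · refine SimpleGraph.Adj.reachable ?_
        rw [← SimpleGraph.mem_edgeSet, hT'edge]
        exact Set.mem_insert_of_mem _ ⟨h, hfe⟩
  have hT'reach : ∀ u v : V, T'.Reachable u v := fun u v =>
    hkey u v (hTreach u trivial v trivial)
  -- acyclicity of T'
  have hT'acyc : T'.IsAcyclic := by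
    intro z c hc
    by_cases hec : e ∈ c.edges
    · have := (SimpleGraph.adj_and_reachable_delete_edges_iff_exists_cycle
        (G := T') (v := a) (w := b)).mpr ⟨z, c, hc, hec⟩
      obtain ⟨-, ⟨r⟩⟩ := this
      have hsub : (T' \ SimpleGraph.fromEdgeSet {e}).edgeSet ⊆ T.edgeSet \ {f} := by
        rw [SimpleGraph.edgeSet_sdiff, hT'edge]
        rintro e' ⟨h1, h2⟩
        rcases h1 with rfl | ⟨h1, hne⟩
        · exfalso
          apply h2
          rw [SimpleGraph.edgeSet_fromEdgeSet]
          exact ⟨rfl, hnde⟩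
        · exact ⟨h1, hne⟩
      have hre : ∀ e' ∈ r.edges, e' ∈ T.edgeSet \ {f} := fun e' he' =>
        hsub (r.edges_subset_edgeSet he')
      set r' : T.Walk a b := r.transfer T (fun e' he' => (hre e' he').1) with hr'def
      have hfr' : f ∉ r'.edges := by
        rw [hr'def, SimpleGraph.Walk.edges_transfer]
        exact fun hmem => (hre _ hmem).2 rfl
      have hpath := hTacyc.path_unique p r'.toPath
      have : f ∈ (r'.toPath : T.Walk a b).edges := by rw [← hpath]; exact hfp
      exact hfr' (SimpleGraph.Walk.edges_toPath_subset r' this)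
    · have hcin : ∀ e' ∈ c.edges, e' ∈ T.edgeSet := by
        intro e' he'
        have := c.edges_subset_edgeSet he'
        rw [hT'edge] at this
        rcases this with rfl | ⟨h1, -⟩
        · exact absurd he' hec
        · exact h1
      exact hTacyc (c.transfer T hcin) (hc.transfer hcin)
  -- weight comparison
  have hfin : totalWeight T' w < totalWeight T w := by
    have h1 : T'.edgeSet.toFinite.toFinset
        = insert e ((T.edgeSet.toFinite.toFinset).erase f) := by
      ext e'
      simp only [Set.Finite.mem_toFinset, hT'edge, Set.mem_insert_iff, Finset.mem_insert,
        Finset.mem_erase, Set.mem_diff, Set.mem_singleton_iff]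
      tauto
    have h2 : w f + ∑ e' ∈ (T.edgeSet.toFinite.toFinset).erase f, w e'
        = ∑ e' ∈ T.edgeSet.toFinite.toFinset, w e' :=
      Finset.add_sum_erase _ _ (by simpa using hfT)
    rw [totalWeight, totalWeight, h1, Finset.sum_insert
      (by simp only [Finset.mem_erase, Set.Finite.mem_toFinset]; exact fun h => heT h.2)]
    linarith
  have hle := hTmin T' hT'G ⟨fun _ _ _ _ => trivial, fun u _ v _ => hT'reach u v, hT'acyc⟩
  exact absurd hle (not_le.mpr hfin)

theorem prim_order_of_graph_eq_prim_order_of_mst {V : Type*} [Fintype V] (G T : SimpleGraph V) (w : Sym2 V → ℝ)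
    (hconn : G.Connected) (hdistinct : Set.InjOn w G.edgeSet)
    (hT : IsMSTOn G w Set.univ T) (v₀ : V) (P PT : V → ℕ)
    (hP : IsPrimOrderOn G w Set.univ v₀ P)
    (hPT : IsPrimOrderOn T w Set.univ v₀ PT) :
    P = PT := by
  classical
  obtain ⟨-, hPv₀, hPbij, hPmin⟩ := hP
  obtain ⟨-, hPTv₀, hPTbij, hPTmin⟩ := hPT
  rw [Set.ncard_univ] at hPbij hPTbij
  have hTG := hT.1
  have hPmem : ∀ v, P v ∈ Set.Icc 1 (Nat.card V) := fun v => hPbij.1 trivial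
  have hPTmem : ∀ v, PT v ∈ Set.Icc 1 (Nat.card V) := fun v => hPTbij.1 trivial
  have hPinj := hPbij.2.1
  have hPTinj := hPTbij.2.1
  have main : ∀ k, ∀ v : V, P v ≤ k → PT v = P v := by
    intro k
    induction k using Nat.strong_induction_on with
    | _ k ih =>
    intro v hvk
    rcases lt_or_eq_of_le hvk with hlt | heq
    · exact ih (P v) hlt v le_rfl
    by_cases h1 : P v = 1
    · have hv : v = v₀ := hPinj trivial trivial (by rw [h1, hPv₀])
      rw [hv, hPTv₀, hPv₀]
    · have hset : ∀ x : V, P x < P v ↔ PT x < P v := by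
        intro x
        constructor
        · intro hx
          have := ih (P x) (heq ▸ hx) x le_rfl
          omega
        · intro hx
          obtain ⟨y, -, hy⟩ := hPbij.2.2 (hPTmem x)
          have hylt : P y < k := by rw [hy]; omega
          have h2 : PT y = P y := ih (P y) hylt y le_rfl
          have hyx : y = x := hPTinj trivial trivial (by rw [h2, hy])
          subst hyx
          omega
      obtain ⟨u, -, hu_lt, hu_adj, hu_min⟩ := hPmin v trivial h1
      obtain ⟨v', -, hv'⟩ := hPTbij.2.2 (hPmem v)
      have hv'ne1 : PT v' ≠ 1 := by rw [hv']; exact h1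
      obtain ⟨u', -, hu'_lt, hu'_adj, hu'_min⟩ := hPTmin v' trivial hv'ne1
      have hTu_v : T.Adj u v :=
        cut_property (L := {x : V | P x < P v}) hdistinct hT hu_lt
          (lt_irrefl (P v)) hu_adj
          (fun x y hx hy hxy => hu_min x trivial y trivial hx (not_lt.mp hy) hxy)
      have hPTv : P v ≤ PT v := by
        have h4 : ¬ PT v < P v := fun hc => lt_irrefl _ ((hset v).mpr hc)
        omega
      have hPTu : PT u = P u := ih (P u) (by omega) u le_rfl
      have hle1 : w s(u', v') ≤ w s(u, v) :=
        hu'_min u trivial v trivial (by rw [hPTu, hv']; exact hu_lt)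
          (by rw [hv']; exact hPTv) hTu_v
      have hu'L : P u' < P v := by
        have h3 : PT u' < P v := by omega
        exact (hset u').mpr h3
      have hv'R : P v ≤ P v' := by
        have h5 : ¬ P v' < P v := fun hc => by
          have := (hset v').mp hc; omega
        omega
      have hle2 : w s(u, v) ≤ w s(u', v') :=
        hu_min u' trivial v' trivial hu'L hv'R (hTG hu'_adj)
      have heq_e : s(u, v) = s(u', v') :=
        hdistinct hu_adj (hTG hu'_adj) (le_antisymm hle2 hle1)
      rw [Sym2.eq_iff] at heq_e
      rcases heq_e with ⟨hu_eq, hv_eq⟩ | ⟨hu_eq, hv_eq⟩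
      · subst hv_eq
        exact hv'
      · exfalso
        rw [hu_eq] at hu_lt
        omega
  funext v
  exact (main (Nat.card V) v (hPmem v).2).symm
end

section
/- Let G be a finite connected simple graph with real edge weights (ties among edge weights allowed), and suppose a run of Prim's algorithm on G with seed vertex v₀ produces the Prim order P of G and the spanning tree T consisting of the edges chosen at each step (so that T is a minimum spanning tree of G). Then P is a Prim order of T with seed v₀; that is, every Prim order of G is a Prim order of the minimum spanning tree that the corresponding run produces. -/
open SimpleGraph

variable {V : Type*}

theorem prim_order_of_graph_is_prim_order_of_produced_tree {V : Type*} [Fintype V] (G T : SimpleGraph V) (w : Sym2 V → ℝ)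
    (hconn : G.Connected) (v₀ : V) (P : V → ℕ) (c : V → V)
    (hP : IsPrimOrderOn G w Set.univ v₀ P)
    (hc : ∀ v : V, P v ≠ 1 → P (c v) < P v ∧ G.Adj (c v) v ∧
      ∀ x y : V, P x < P v → P v ≤ P y → G.Adj x y → w s(c v, v) ≤ w s(x, y))
    (hTedges : T.edgeSet = {e | ∃ v, P v ≠ 1 ∧ e = s(c v, v)}) :
    IsPrimOrderOn T w Set.univ v₀ P := by
  obtain ⟨hv₀, hP1, hbij, _⟩ := hP
  refine ⟨hv₀, hP1, hbij, ?_⟩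
  intro v _ hne
  obtain ⟨hlt, hadj, hmin⟩ := hc v hne
  have hTadj : T.Adj (c v) v := by
    rw [← SimpleGraph.mem_edgeSet, hTedges]
    exact ⟨v, hne, rfl⟩
  refine ⟨c v, Set.mem_univ _, hlt, hTadj, ?_⟩
  intro x _ y _ hx hy hxy
  have hmem : s(x, y) ∈ T.edgeSet := hxy
  rw [hTedges] at hmem
  obtain ⟨v', hne', heq⟩ := hmem
  have hGxy : G.Adj x y := by
    rcases (Sym2.eq_iff.mp heq) with ⟨h1, h2⟩ | ⟨h1, h2⟩
    · rw [h1, h2]; exact (hc v' hne').2.1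
    · rw [h1, h2]; exact ((hc v' hne').2.1).symm
  exact hmin x y hx hy hGxy
end

section
/- Let G be a finite connected simple graph with real edge weights (ties among edge weights allowed), and let T be any minimum spanning tree of G. Then every Prim order of T with seed vertex v₀ is also a Prim order of G with seed v₀. -/
open SimpleGraph

variable {V : Type*}

private lemma del_eq_sdiff (G : SimpleGraph V) (s : Set (Sym2 V)) :
    G.deleteEdges s = G \ SimpleGraph.fromEdgeSet s := by
  ext a b
  simp only [deleteEdges_adj, sdiff_adj, fromEdgeSet_adj]
  constructor
  · rintro ⟨h1, h2⟩; exact ⟨h1, fun hh => h2 hh.1⟩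
  · rintro ⟨h1, h2⟩; exact ⟨h1, fun hh => h2 ⟨hh, h1.ne⟩⟩

private lemma bridge_of_acyclic {T : SimpleGraph V} (hac : T.IsAcyclic) {a b : V}
    (hab : T.Adj a b) : ¬ (T.deleteEdges {s(a,b)}).Reachable a b := by
  have := (isAcyclic_iff_forall_adj_isBridge.mp hac hab)
  rw [isBridge_iff] at this
  exact this

private lemma reach_del_aux {T : SimpleGraph V} (a b : V) :
    ∀ {z c : V} (_ : T.Walk z c),
    (T.deleteEdges {s(a,b)}).Reachable z c ∨
    ((T.deleteEdges {s(a,b)}).Reachable z a ∧ (T.deleteEdges {s(a,b)}).Reachable b c) ∨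
    ((T.deleteEdges {s(a,b)}).Reachable z b ∧ (T.deleteEdges {s(a,b)}).Reachable a c) := by
  intro z c p
  induction p with
  | nil => exact Or.inl (Reachable.refl _)
  | @cons z z' c h q ih =>
    by_cases he : s(z, z') = s(a, b)
    · rw [Sym2.eq_iff] at he
      rcases he with ⟨rfl, rfl⟩ | ⟨rfl, rfl⟩
      · rcases ih with h1 | ⟨h1, h2⟩ | ⟨h1, h2⟩
        · exact Or.inr (Or.inl ⟨Reachable.refl _, h1⟩)
        · exact Or.inr (Or.inl ⟨Reachable.refl _, h2⟩)
        · exact Or.inl h2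
      · rcases ih with h1 | ⟨h1, h2⟩ | ⟨h1, h2⟩
        · exact Or.inr (Or.inr ⟨Reachable.refl _, h1⟩)
        · exact Or.inl h2
        · exact Or.inr (Or.inr ⟨Reachable.refl _, h2⟩)
    · have hadj : (T.deleteEdges {s(a,b)}).Adj z z' := by
        rw [deleteEdges_adj]; exact ⟨h, by simpa using he⟩
      rcases ih with h1 | ⟨h1, h2⟩ | ⟨h1, h2⟩
      · exact Or.inl (hadj.reachable.trans h1)
      · exact Or.inr (Or.inl ⟨hadj.reachable.trans h1, h2⟩)
      · exact Or.inr (Or.inr ⟨hadj.reachable.trans h1, h2⟩)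

private lemma reach_del {T : SimpleGraph V} {a b z : V} (hz : T.Reachable z a) :
    (T.deleteEdges {s(a,b)}).Reachable z a ∨ (T.deleteEdges {s(a,b)}).Reachable z b := by
  obtain ⟨p⟩ := hz
  rcases reach_del_aux a b p with h1 | ⟨h1, _⟩ | ⟨h1, _⟩
  · exact Or.inl h1
  · exact Or.inl h1
  · exact Or.inr h1

private lemma cross_exists {T : SimpleGraph V} {k : ℕ} {P : V → ℕ} :
    ∀ {x y : V} (p : T.Walk x y), p.IsPath → P x < k → ¬ P y < k →
    ∃ a b, P a < k ∧ ¬ P b < k ∧ T.Adj a b ∧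
      (T.deleteEdges {s(a,b)}).Reachable x a ∧ (T.deleteEdges {s(a,b)}).Reachable b y := by
  intro x y p
  induction p with
  | nil => intro _ hx hy; exact absurd hx hy
  | @cons x z y h q ih =>
    intro hp hx hy
    by_cases hz : P z < k
    · obtain ⟨a, b, ha, hb, hab, hxa, hby⟩ := ih hp.of_cons hz hy
      refine ⟨a, b, ha, hb, hab, ?_, hby⟩
      have hne : s(x, z) ≠ s(a, b) := by
        intro hh
        rw [Sym2.eq_iff] at hh
        rcases hh with ⟨rfl, rfl⟩ | ⟨rfl, rfl⟩
        · exact hb hz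
        · exact hb hx
      have hadj : (T.deleteEdges {s(a,b)}).Adj x z := by
        rw [deleteEdges_adj]; exact ⟨h, by simpa using hne⟩
      exact hadj.reachable.trans hxa
    · refine ⟨x, z, hx, hz, h, Reachable.refl x, ?_⟩
      have hq : ∀ e ∈ q.edges, e ∉ ({s(x,z)} : Set (Sym2 V)) := by
        intro e he hmem
        simp only [Set.mem_singleton_iff] at hmem
        subst hmem
        have := hp.edges_nodup
        rw [Walk.edges_cons, List.nodup_cons] at this
        exact this.1 he
      exact ⟨q.toDeleteEdges _ hq⟩

theorem prim_order_of_mst_is_prim_order_of_graph {V : Type*} [Fintype V] (G T : SimpleGraph V) (w : Sym2 V → ℝ)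
    (hconn : G.Connected) (hT : IsMSTOn G w Set.univ T)
    (v₀ : V) (P : V → ℕ) (hP : IsPrimOrderOn T w Set.univ v₀ P) :
    IsPrimOrderOn G w Set.univ v₀ P := by
  classical
  obtain ⟨hTG, hTtree, hTmin⟩ := hT
  obtain ⟨-, hPv₀, hPbij, hPmin⟩ := hP
  refine ⟨trivial, hPv₀, hPbij, ?_⟩
  intro v _ hv1
  obtain ⟨u, -, huv, hadjuv, hmin⟩ := hPmin v trivial hv1
  refine ⟨u, trivial, huv, hTG hadjuv, ?_⟩
  intro x _ y _ hx hy hxy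
  by_contra hlt
  push_neg at hlt
  have hxyT : ¬ T.Adj x y := fun h => absurd (hmin x trivial y trivial hx hy h) (not_le.mpr hlt)
  have hy' : ¬ P y < P v := not_lt.mpr hy
  obtain ⟨p0⟩ := hTtree.2.1 x trivial y trivial
  obtain ⟨a, b, ha, hb, hab, hxa, hby⟩ :=
    cross_exists (k := P v) (P := P) p0.toPath.val p0.toPath.property hx hy'
  have hwab : w s(u,v) ≤ w s(a,b) := hmin a trivial b trivial ha (not_lt.mp hb) hab
  have hxyne : x ≠ y := hxy.ne
  set T' : SimpleGraph V := (T.deleteEdges {s(a,b)}) ⊔ SimpleGraph.edge x y with hT'def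
  have hdelle : T.deleteEdges {s(a,b)} ≤ T' := le_sup_left
  have hT'G : T' ≤ G := by
    apply sup_le
    · exact le_trans (SimpleGraph.deleteEdges_le _) hTG
    · intro p q hpq
      rw [edge_adj] at hpq
      rcases hpq.1 with ⟨rfl, rfl⟩ | ⟨rfl, rfl⟩
      exacts [hxy, hxy.symm]
  have hTac : T.IsAcyclic := hTtree.2.2
  have hnab : ¬ (T.deleteEdges {s(a,b)}).Reachable a b := bridge_of_acyclic hTac hab
  have hadjxy' : T'.Adj x y := Or.inr (by rw [edge_adj]; exact ⟨Or.inl ⟨rfl, rfl⟩, hxyne⟩)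
  have hub : ∀ z, T'.Reachable z x := by
    intro z
    rcases reach_del (b := b) (hTtree.2.1 z trivial a trivial) with h1 | h1
    · exact (h1.mono hdelle).trans (hxa.mono hdelle).symm
    · exact ((h1.mono hdelle).trans ((hby.mono hdelle))).trans hadjxy'.symm.reachable
  have hbridge : ¬ (T'.deleteEdges {s(x,y)}).Reachable x y := by
    intro hr
    apply hnab
    have hle : T'.deleteEdges {s(x,y)} ≤ T.deleteEdges {s(a,b)} := by
      intro p q hpq
      rw [deleteEdges_adj] at hpq
      rcases hpq.1 with hA | hB
      · exact hA
      · exfalso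
        rw [edge_adj] at hB
        apply hpq.2
        rcases hB.1 with ⟨rfl, rfl⟩ | ⟨rfl, rfl⟩
        · rfl
        · exact Sym2.eq_swap
    exact hxa.symm.trans ((hr.mono hle).trans hby.symm)
  have hT'ac : T'.IsAcyclic := by
    intro v' c hc
    by_cases hin : s(x,y) ∈ c.edges
    · have hbr : T'.IsBridge s(x,y) := by
        rw [isBridge_iff]
        exact hbridge
      rw [isBridge_iff_adj_and_forall_cycle_notMem hadjxy'] at hbr
      exact hbr c hc hin
    · have hsub : ∀ e' ∈ c.edges, e' ∈ T.edgeSet := by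
        intro e' he'
        have hmem : e' ∈ T'.edgeSet := c.edges_subset_edgeSet he'
        rw [hT'def, edgeSet_sup, edgeSet_deleteEdges, edge_edgeSet_of_ne hxyne] at hmem
        rcases hmem with ⟨h1, _⟩ | h1
        · exact h1
        · rw [Set.mem_singleton_iff] at h1
          exact absurd (h1 ▸ he') hin
      exact hTac (c.transfer T hsub) (hc.transfer hsub)
  have hT'tree : IsTreeOn T' Set.univ :=
    ⟨fun _ _ _ _ => trivial, fun p _ q _ => (hub p).trans (hub q).symm, hT'ac⟩
  have hmst := hTmin T' hT'G hT'tree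
  -- weight computation
  have heE : s(a,b) ∈ T.edgeSet := hab
  have hxyE : s(x,y) ∉ T.edgeSet := hxyT
  set F : Finset (Sym2 V) := T.edgeSet.toFinite.toFinset with hF
  have hT'F : T'.edgeSet.toFinite.toFinset = insert s(x,y) (F.erase s(a,b)) := by
    ext e'
    simp only [Set.Finite.mem_toFinset, Finset.mem_insert, Finset.mem_erase, hT'def,
      edgeSet_sup, edgeSet_deleteEdges, edge_edgeSet_of_ne hxyne, Set.mem_union,
      Set.mem_diff, Set.mem_singleton_iff, hF]
    tauto
  have hmemF : s(a,b) ∈ F := by rw [hF]; exact (T.edgeSet.toFinite).mem_toFinset.mpr heE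
  have hnotinF : s(x,y) ∉ F.erase s(a,b) := fun h =>
    hxyE ((T.edgeSet.toFinite).mem_toFinset.mp (Finset.mem_of_mem_erase h))
  have hsum : totalWeight T' w = totalWeight T w - w s(a,b) + w s(x,y) := by
    unfold totalWeight
    rw [hT'F, Finset.sum_insert hnotinF]
    have h2 := Finset.add_sum_erase F w hmemF
    rw [← hF]
    linarith
  rw [hsum] at hmst
  linarith
end

section
/- Let G be a finite connected simple graph with real edge weights (ties among edge weights allowed), and suppose a run of Prim's algorithm on G with an arbitrary seed vertex produces the Prim order P and the minimum spanning tree T with edge set E_T. Let E_max ⊆ E_T be the set of edges of T whose weight equals the maximum edge weight in T, and let e_max = (v_i, v_j) be the element of E_max with the largest Prim order P(e_max) = max(P(v_i), P(v_j)). Then deleting e_max from T leaves exactly two connected components T_L and T_R, and their vertex sets are V_L = {v ∈ V : P(v) < P(e_max)} and V_R = {v ∈ V : P(v) ≥ P(e_max)}. -/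
open SimpleGraph

variable {V : Type*}

theorem vertex_sets_after_breaking_longest_edge_with_largest_prim_order {V : Type*} [Fintype V] (G T : SimpleGraph V) (w : Sym2 V → ℝ)
    (hconn : G.Connected) (v₀ : V) (P : V → ℕ) (c : V → V)
    (hP : IsPrimOrderOn G w Set.univ v₀ P)
    (hc : ∀ v : V, P v ≠ 1 → P (c v) < P v ∧ G.Adj (c v) v ∧
      ∀ x y : V, P x < P v → P v ≤ P y → G.Adj x y → w s(c v, v) ≤ w s(x, y))
    (hTedges : T.edgeSet = {e | ∃ v, P v ≠ 1 ∧ e = s(c v, v)})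
    (vi vj : V) (hmem : s(vi, vj) ∈ T.edgeSet)
    (hmax : ∀ e ∈ T.edgeSet, w e ≤ w s(vi, vj))
    (hlargest : ∀ e ∈ T.edgeSet, w e = w s(vi, vj) → edgeOrder P e ≤ edgeOrder P s(vi, vj)) :
    ∃ cL cR : (T.deleteEdges {s(vi, vj)}).ConnectedComponent,
      cL ≠ cR ∧ (∀ cc, cc = cL ∨ cc = cR) ∧
      cL.supp = {v | P v < edgeOrder P s(vi, vj)} ∧
      cR.supp = {v | edgeOrder P s(vi, vj) ≤ P v} := by
  obtain ⟨-, hP1, hbij, -⟩ := hP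
  have Pinj : Function.Injective P := fun a b h =>
    hbij.injOn (Set.mem_univ a) (Set.mem_univ b) h
  have Pge1 : ∀ v, 1 ≤ P v := fun v => (hbij.mapsTo (Set.mem_univ v)).1
  have hmem' := hmem
  rw [hTedges] at hmem'
  obtain ⟨vm, hvm1, he⟩ := hmem'
  set T' := T.deleteEdges {s(vi, vj)} with hT'
  set m := edgeOrder P s(vi, vj) with hm
  have hcvm := hc vm hvm1
  have hedgeOrder : ∀ a b : V, edgeOrder P s(a, b) = max (P a) (P b) := fun a b => rfl
  have hme : m = P vm := by
    rw [hm, he, hedgeOrder]; exact max_eq_right hcvm.1.le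
  have hm2 : 2 ≤ m := by
    have := Pge1 vm; omega
  -- Lemma A: the tree edge into a vertex v with P v ≠ m is not the deleted edge
  have hA : ∀ v, P v ≠ 1 → P v ≠ m → s(c v, v) ≠ s(vi, vj) := by
    intro v h1 hvm hEq
    apply hvm
    have h2 := congrArg (edgeOrder P) hEq
    rw [hedgeOrder, max_eq_right (hc v h1).1.le] at h2
    exact h2
  -- Lemma B: for v with m < P v, its parent is on the right side
  have hB : ∀ v, m < P v → m ≤ P (c v) := by
    intro v hv
    by_contra h
    push_neg at h
    have h1 : P v ≠ 1 := by omega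
    obtain ⟨hlt, hadj, -⟩ := hc v h1
    have hmin : w s(vi, vj) ≤ w s(c v, v) := by
      rw [he]
      exact hcvm.2.2 (c v) v (by omega) (by omega) hadj
    have hmemv : s(c v, v) ∈ T.edgeSet := by rw [hTedges]; exact ⟨v, h1, rfl⟩
    have heq : w s(c v, v) = w s(vi, vj) := le_antisymm (hmax _ hmemv) hmin
    have hord := hlargest _ hmemv heq
    rw [hedgeOrder, max_eq_right hlt.le] at hord
    omega
  -- each edge of T' has both endpoints on the same side of the cut
  have hside : ∀ a b : V, T'.Adj a b → (P a < m ↔ P b < m) := by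
    intro a b hab
    rw [hT', SimpleGraph.deleteEdges_adj] at hab
    obtain ⟨hTab, hne⟩ := hab
    have hmem2 : s(a, b) ∈ T.edgeSet := hTab
    rw [hTedges] at hmem2
    obtain ⟨v, hv1, hveq⟩ := hmem2
    have hlt := (hc v hv1).1
    have hcases := Sym2.eq_iff.mp hveq
    rcases lt_trichotomy (P v) m with h | h | h
    · rcases hcases with ⟨ha, hb⟩ | ⟨ha, hb⟩ <;> subst ha <;> subst hb <;>
        constructor <;> intro <;> omega
    · exfalso
      apply hne
      have hvvm : v = vm := Pinj (by omega)
      rw [Set.mem_singleton_iff, hveq, hvvm, ← he]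
    · have hcv := hB v h
      rcases hcases with ⟨ha, hb⟩ | ⟨ha, hb⟩ <;> subst ha <;> subst hb <;>
        constructor <;> intro <;> omega
  have hsideR : ∀ a b : V, T'.Reachable a b → (P a < m ↔ P b < m) := by
    intro a b h
    obtain ⟨p⟩ := h
    induction p with
    | nil => exact Iff.rfl
    | cons h p ih => exact (hside _ _ h).trans ih
  -- left connectivity
  have hL : ∀ k : ℕ, ∀ v : V, P v = k → P v < m → T'.Reachable v v₀ := by
    intro k
    induction k using Nat.strong_induction_on with
    | _ k ih =>
      intro v hk hv
      by_cases h1 : P v = 1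
      · have hveq : v = v₀ := Pinj (by rw [h1, hP1])
        subst hveq
        exact SimpleGraph.Reachable.refl v
      · obtain ⟨hlt, hadj, -⟩ := hc v h1
        have hTadj : T.Adj (c v) v := by
          rw [← SimpleGraph.mem_edgeSet, hTedges]; exact ⟨v, h1, rfl⟩
        have hadj' : T'.Adj (c v) v := by
          rw [hT', SimpleGraph.deleteEdges_adj]
          exact ⟨hTadj, by simpa using hA v h1 (by omega)⟩
        exact hadj'.symm.reachable.trans (ih (P (c v)) (by omega) _ rfl (by omega))
  -- right connectivity
  have hR : ∀ k : ℕ, ∀ v : V, P v = k → m ≤ P v → T'.Reachable v vm := by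
    intro k
    induction k using Nat.strong_induction_on with
    | _ k ih =>
      intro v hk hv
      by_cases hveq : P v = m
      · have : v = vm := Pinj (by omega)
        subst this
        exact SimpleGraph.Reachable.refl v
      · have h1 : P v ≠ 1 := by omega
        obtain ⟨hlt, hadj, -⟩ := hc v h1
        have hcv := hB v (by omega)
        have hTadj : T.Adj (c v) v := by
          rw [← SimpleGraph.mem_edgeSet, hTedges]; exact ⟨v, h1, rfl⟩
        have hadj' : T'.Adj (c v) v := by
          rw [hT', SimpleGraph.deleteEdges_adj]
          exact ⟨hTadj, by simpa using hA v h1 hveq⟩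
        exact hadj'.symm.reachable.trans (ih (P (c v)) (by omega) _ rfl hcv)
  refine ⟨T'.connectedComponentMk v₀, T'.connectedComponentMk vm, ?_, ?_, ?_, ?_⟩
  · intro h
    have := hsideR v₀ vm (SimpleGraph.ConnectedComponent.exact h)
    rw [hP1] at this
    omega
  · intro cc
    refine cc.ind (fun v => ?_)
    by_cases h : P v < m
    · exact Or.inl (SimpleGraph.ConnectedComponent.sound (hL _ v rfl h))
    · exact Or.inr (SimpleGraph.ConnectedComponent.sound (hR _ v rfl (by omega)))
  · ext v
    rw [SimpleGraph.ConnectedComponent.mem_supp_iff, SimpleGraph.ConnectedComponent.eq]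
    constructor
    · intro h
      have := hsideR v v₀ h
      rw [hP1] at this
      simpa using this.mpr (by omega)
    · exact hL _ v rfl
  · ext v
    rw [SimpleGraph.ConnectedComponent.mem_supp_iff, SimpleGraph.ConnectedComponent.eq]
    constructor
    · intro h
      have := hsideR v vm h
      simp only [Set.mem_setOf_eq]
      omega
    · exact hR _ v rfl
end

section
/- Let T be a finite tree on vertex set V with real edge weights, let P be a Prim order of T with seed vertex v₀, let E_max be the set of edges of T whose weight equals the maximum edge weight in T, and let e_max be the element of E_max with the largest Prim order P(e_max); let T_L be the connected component of T − e_max containing the seed v₀. Then every edge e ∈ E_max with e ≠ e_max is an edge of T_L. -/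
open SimpleGraph

variable {V : Type*}

lemma aux_main {V : Type*} [Fintype V] (T : SimpleGraph V) (w : Sym2 V → ℝ)
    (hac : T.IsAcyclic)
    (v₀ : V) (P : V → ℕ) (hP : IsPrimOrderOn T w Set.univ v₀ P)
    (u v : V) (huv : T.Adj u v) (hlt : P u < P v) :
    ∀ e ∈ T.edgeSet, edgeOrder P e ≤ P v → e ≠ s(u, v) →
      e ∈ (T.deleteEdges {s(u, v)}).edgeSet ∧
      ∀ x ∈ e, x ∈ ((T.deleteEdges {s(u, v)}).connectedComponentMk v₀).supp := by
  classical
  obtain ⟨-, hP1, hbij, hstep⟩ := hP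
  have hinj : ∀ {a b : V}, P a = P b → a = b := fun {a b} h =>
    hbij.injOn (Set.mem_univ a) (Set.mem_univ b) h
  set Tpre := restrictTo T {x | P x < P v} with hTpre
  -- prefix reachability
  have reach_pre : ∀ x : V, P x < P v → Tpre.Reachable v₀ x := by
    intro x hx
    obtain ⟨k, hk⟩ : ∃ k, P x = k := ⟨P x, rfl⟩
    induction k using Nat.strong_induction_on generalizing x with
    | _ k ih =>
      by_cases h1 : P x = 1
      · have : v₀ = x := hinj (hP1.trans h1.symm)
        exact this ▸ Reachable.refl _
      · obtain ⟨u', -, hu'lt, hadj', -⟩ := hstep x (Set.mem_univ _) h1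
        have hr : Tpre.Reachable v₀ u' :=
          ih (P u') (hk ▸ hu'lt) u' (hu'lt.trans hx) rfl
        exact hr.trans (Adj.reachable ⟨hadj', hu'lt.trans hx, hx⟩)
  have hle_T : Tpre ≤ T := fun _ _ h => h.1
  have hle_T' : Tpre ≤ T.deleteEdges {s(u, v)} := by
    intro a b ⟨h, ha, hb⟩
    rw [deleteEdges_adj]
    refine ⟨h, ?_⟩
    intro hcon
    rw [Set.mem_singleton_iff] at hcon
    have hv : v ∈ s(a, b) := hcon ▸ Sym2.mem_mk_right u v
    rcases Sym2.mem_iff.1 hv with rfl | rfl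
    · exact lt_irrefl _ (Set.mem_setOf_eq ▸ ha)
    · exact lt_irrefl _ (Set.mem_setOf_eq ▸ hb)
  -- support of Tpre walks lies in prefix
  have supp_lt : ∀ {a b : V} (p : Tpre.Walk a b), P a < P v →
      ∀ y ∈ p.support, P y < P v := by
    intro a b p
    induction p with
    | nil => intro ha y hy; rw [Walk.support_nil, List.mem_singleton] at hy; exact hy ▸ ha
    | cons h p ih =>
      intro ha y hy
      rw [Walk.support_cons] at hy
      rcases List.mem_cons.1 hy with rfl | hy
      · exact ha
      · exact ih h.2.2 y hy
  -- uniqueness of earlier neighbor of v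
  have uniq : ∀ x : V, T.Adj x v → P x < P v → x = u := by
    intro x hxv hx
    by_contra hxu
    obtain ⟨p0⟩ : Tpre.Reachable x u :=
      (reach_pre x hx).symm.trans (reach_pre u hlt)
    have hsupp0 : ∀ y ∈ p0.support, P y < P v := supp_lt p0 hx
    have pT : T.Walk x u := p0.mapLe hle_T
    have hsuppT : ∀ y ∈ (p0.mapLe hle_T).support, P y < P v := by
      intro y hy
      rw [Walk.support_map] at hy
      obtain ⟨z, hz, rfl⟩ := List.mem_map.1 hy
      exact hsupp0 z hz
    set q := (p0.mapLe hle_T).toPath with hq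
    have hvq : v ∉ q.1.support := fun hmem =>
      absurd (hsuppT v (Walk.support_toPath_subset _ hmem)) (lt_irrefl _)
    have hpath2 : (Walk.cons (hxv.symm) q.1).IsPath := q.2.cons hvq
    have := (isAcyclic_iff_path_unique.1 hac)
      (Path.singleton (huv.symm)) ⟨Walk.cons (hxv.symm) q.1, hpath2⟩
    have hxsupp : x ∈ (Path.singleton (huv.symm) : T.Path v u).1.support := by
      rw [this]
      exact List.mem_cons_of_mem _ (Walk.start_mem_support _)
    simp only [Path.singleton, Walk.support_cons, Walk.support_nil,
      List.mem_cons, List.mem_singleton] at hxsupp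
    rcases hxsupp with rfl | rfl | h
    · exact absurd hx (lt_irrefl _)
    · exact hxu rfl
    · simp at h
  -- main argument
  intro e he hord hne
  induction e using Sym2.ind with
  | _ a b =>
  rw [mem_edgeSet] at he
  have hord' : max (P a) (P b) ≤ P v := hord
  have hab : a ≠ b := he.ne
  have halt : P a < P v ∧ P b < P v := by
    constructor
    · rcases lt_or_eq_of_le (le_trans (le_max_left _ _) hord') with h | h
      · exact h
      · exfalso
        have hav : a = v := hinj h
        subst hav
        have hbv : P b < P a := by
          rcases lt_or_eq_of_le (le_trans (le_max_right (P a) _) hord') with h' | h'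
          · exact h'
          · exact absurd (hinj h') (Ne.symm hab)
        have := uniq b he.symm hbv
        subst this
        exact hne (Sym2.eq_swap)
    · rcases lt_or_eq_of_le (le_trans (le_max_right (P a) _) hord') with h | h
      · exact h
      · exfalso
        have hbv : b = v := hinj h
        subst hbv
        have hav : P a < P b := by
          rcases lt_or_eq_of_le (le_trans (le_max_left _ (P b)) hord') with h' | h'
          · exact h'
          · exact absurd (hinj h') hab
        have := uniq a he hav
        subst this
        exact hne rfl
  constructor
  · rw [mem_edgeSet, deleteEdges_adj]
    exact ⟨he, by simpa using hne⟩
  · intro x hx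
    rw [ConnectedComponent.mem_supp_iff]
    have hxlt : P x < P v := by
      rcases Sym2.mem_iff.1 hx with rfl | rfl
      · exact halt.1
      · exact halt.2
    exact ConnectedComponent.sound (((reach_pre x hxlt).mono hle_T').symm)

theorem tied_longest_edges_lie_in_left_subtree {V : Type*} [Fintype V] (T : SimpleGraph V) (w : Sym2 V → ℝ)
    (hT : IsTreeOn T Set.univ)
    (v₀ : V) (P : V → ℕ) (hP : IsPrimOrderOn T w Set.univ v₀ P)
    (vi vj : V) (hmem : s(vi, vj) ∈ T.edgeSet)
    (hmax : ∀ e ∈ T.edgeSet, w e ≤ w s(vi, vj))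
    (hlargest : ∀ e ∈ T.edgeSet, w e = w s(vi, vj) → edgeOrder P e ≤ edgeOrder P s(vi, vj)) :
    ∀ e ∈ T.edgeSet, w e = w s(vi, vj) → e ≠ s(vi, vj) →
      e ∈ (T.deleteEdges {s(vi, vj)}).edgeSet ∧
      ∀ v ∈ e, v ∈ ((T.deleteEdges {s(vi, vj)}).connectedComponentMk v₀).supp := by
  have hadj := T.mem_edgeSet.1 hmem
  have hne : P vi ≠ P vj := fun h =>
    hadj.ne (hP.2.2.1.injOn (Set.mem_univ vi) (Set.mem_univ vj) h)
  intro e he hw hene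
  rcases lt_or_gt_of_ne hne with h | h
  · have hord : edgeOrder P e ≤ P vj := by
      have := hlargest e he hw
      simpa [edgeOrder, max_eq_right h.le] using this
    exact aux_main T w hT.2.2 v₀ P hP vi vj hadj h e he hord hene
  · have hsw : s(vi, vj) = s(vj, vi) := Sym2.eq_swap
    rw [hsw] at hene ⊢
    have hord : edgeOrder P e ≤ P vi := by
      have := hlargest e he hw
      simpa [edgeOrder, max_eq_left h.le] using this
    exact aux_main T w hT.2.2 v₀ P hP vj vi hadj.symm h e he hord hene
end

section
/- Let T be a finite tree on vertex set V with real edge weights and pairwise distinct weights, let e_max be the edge of T of maximum weight, and let T_L and T_R be the two connected components of T − e_max with vertex sets V_L and V_R. If P is a Prim order of T whose seed vertex lies in V_L, then every vertex of V_L precedes every vertex of V_R in the order P; that is, P(u) < P(v) for all u ∈ V_L and v ∈ V_R. -/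
open SimpleGraph

variable {V : Type*}

theorem left_subtree_precedes_right_subtree_in_prim_order {V : Type*} [Fintype V] (T : SimpleGraph V) (w : Sym2 V → ℝ)
    (hT : IsTreeOn T Set.univ) (hdistinct : Set.InjOn w T.edgeSet)
    (vi vj : V) (hmem : s(vi, vj) ∈ T.edgeSet)
    (hmax : ∀ e ∈ T.edgeSet, w e ≤ w s(vi, vj))
    (v₀ : V) (P : V → ℕ) (hP : IsPrimOrderOn T w Set.univ v₀ P)
    (hseed : v₀ ∈ ((T.deleteEdges {s(vi, vj)}).connectedComponentMk vi).supp) :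
    ∀ u ∈ ((T.deleteEdges {s(vi, vj)}).connectedComponentMk vi).supp,
      ∀ v ∈ ((T.deleteEdges {s(vi, vj)}).connectedComponentMk vj).supp,
        P u < P v := by
  set T' := T.deleteEdges {s(vi, vj)} with hT'
  -- separation
  have hsep : ¬ T'.Reachable vi vj := by
    have hb := (isAcyclic_iff_forall_adj_isBridge.mp hT.2.2) (T.mem_edgeSet.mp hmem)
    exact (isBridge_iff.mp hb)
  classical
  -- cover
  have key : ∀ {a b : V}, T.Walk a b →
      T'.Reachable a b ∨ T'.Reachable a vi ∨ T'.Reachable a vj := by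
    intro a b p
    induction p with
    | nil => exact Or.inl (Reachable.refl _)
    | @cons a b c h q ih =>
      by_cases he : s(a, b) = s(vi, vj)
      · rcases Sym2.eq_iff.mp he with ⟨rfl, rfl⟩ | ⟨rfl, rfl⟩
        · exact Or.inr (Or.inl (Reachable.refl _))
        · exact Or.inr (Or.inr (Reachable.refl _))
      · have hadj : T'.Adj a b := SimpleGraph.deleteEdges_adj.mpr
          ⟨h, by simp only [Set.mem_singleton_iff]; exact he⟩
        rcases ih with h1 | h1 | h1
        · exact Or.inl (hadj.reachable.trans h1)
        · exact Or.inr (Or.inl (hadj.reachable.trans h1))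
        · exact Or.inr (Or.inr (hadj.reachable.trans h1))
  have hcov : ∀ x : V, T'.Reachable x vi ∨ T'.Reachable x vj := by
    intro x
    obtain ⟨p⟩ := hT.2.1 x trivial vi trivial
    rcases key p with h | h | h
    · exact Or.inl h
    · exact Or.inl h
    · exact Or.inr h
  have hsupp : ∀ x y : V, x ∈ (T'.connectedComponentMk y).supp ↔ T'.Reachable x y := by
    intro x y
    rw [ConnectedComponent.mem_supp_iff, ConnectedComponent.eq]
  intro u hu v hv
  rw [hsupp] at hu hv hseed
  by_contra hlt
  push_neg at hlt
  -- pick the earliest vertex of the right component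
  obtain ⟨v', hv', hv'min⟩ := Finset.exists_min_image
    (Finset.univ.filter (fun x => T'.Reachable x vj)) P ⟨v, by simpa using hv⟩
  simp only [Finset.mem_filter, Finset.mem_univ, true_and] at hv'
  have hv'min' : ∀ x, T'.Reachable x vj → P v' ≤ P x := fun x hx =>
    hv'min x (by simpa using hx)
  obtain ⟨-, hP1, hbij, hstep⟩ := hP
  have hne1 : P v' ≠ 1 := by
    intro h
    have : v' = v₀ := hbij.2.1 trivial trivial (h.trans hP1.symm)
    exact hsep ((this ▸ hv').symm.trans hseed).symm
  obtain ⟨u', -, hu'lt, hadj, hmin⟩ := hstep v' trivial hne1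
  have hu'L : T'.Reachable u' vi := by
    rcases hcov u' with h | h
    · exact h
    · exact absurd (hv'min' u' h) (by omega)
  -- the edge u'-v' crosses the cut, so it is the max edge
  have hedge : s(u', v') = s(vi, vj) := by
    by_contra he
    have hadj' : T'.Adj u' v' := SimpleGraph.deleteEdges_adj.mpr
      ⟨hadj, by simp only [Set.mem_singleton_iff]; exact he⟩
    exact hsep (hu'L.symm.trans (hadj'.reachable.trans hv'))
  -- u and u' are in the same component; u comes later than v'
  have huv' : P v' ≤ P u := by
    have := hv'min' v hv
    omega
  obtain ⟨p⟩ := hu'L.trans hu.symm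
  obtain ⟨d, -, hd1, hd2⟩ := p.exists_boundary_dart {x | P x < P v'} hu'lt (by simp; omega)
  have hdadj : T'.Adj d.fst d.snd := d.adj
  rw [SimpleGraph.deleteEdges_adj] at hdadj
  have hle := hmin d.fst trivial d.snd trivial hd1 (by simpa using hd2) hdadj.1
  rw [hedge] at hle
  have hge := hmax _ (T.mem_edgeSet.mpr hdadj.1)
  have : s(d.fst, d.snd) = s(vi, vj) :=
    hdistinct (T.mem_edgeSet.mpr hdadj.1) hmem (le_antisymm hge hle)
  exact hdadj.2 (by simpa using this)
end
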